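/- Let φ ∈ 𝒮(ℝ) be a Schwartz function with 1_{[-1/4,1/4]} ≤ φ̂ ≤ 1_{[-1/2,1/2]}, and for N ∈ ℕ let f_N(x) = Σ_{1≤n≤N} φ(x-n) e^{2πinx}. Then for every 1 ≤ p < ∞, ‖f_N‖_{L^p(ℝ)} ≍_p N^{1/p}, with implicit constants independent of N. -/

import Mathlib

open MeasureTheory FourierTransform Finset

noncomputable section

namespace Stmt9


lemma norm_exp_I (a b : ℝ) : ‖Complex.exp (2 * Real.pi * Complex.I * a * b)‖ = 1 := by
  rw [show (2 * Real.pi * Complex.I * a * b : ℂ) = ((2 * Real.pi * a * b : ℝ) : ℂ) * Complex.I by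
    push_cast; ring]
  rw [Complex.norm_exp_ofReal_mul_I]

lemma exists_decay (φ : SchwartzMap ℝ ℂ) : ∃ K : ℝ, 1 ≤ K ∧ ∀ x : ℝ, ‖φ x‖ ≤ K * (1 + x^2)⁻¹ := by
  obtain ⟨C0, hC0, h0⟩ := φ.decay 0 0
  obtain ⟨C2, hC2, h2⟩ := φ.decay 2 0
  refine ⟨max (C0 + C2) 1, le_max_right _ _, fun x => ?_⟩
  have hx0 : ‖φ x‖ ≤ C0 := by simpa [norm_iteratedFDeriv_zero] using h0 x
  have hx2 : x^2 * ‖φ x‖ ≤ C2 := by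
    simpa [norm_iteratedFDeriv_zero, sq_abs, abs_pow] using h2 x
  have hpos : (0:ℝ) < 1 + x^2 := by positivity
  have hkey : ‖φ x‖ * (1 + x^2) ≤ C0 + C2 := by nlinarith [norm_nonneg (φ x)]
  calc ‖φ x‖ = (‖φ x‖ * (1 + x^2)) * (1 + x^2)⁻¹ := by field_simp
    _ ≤ (C0 + C2) * (1 + x^2)⁻¹ := mul_le_mul_of_nonneg_right hkey (by positivity)
    _ ≤ max (C0 + C2) 1 * (1 + x^2)⁻¹ :=
        mul_le_mul_of_nonneg_right (le_max_left _ _) (by positivity)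

lemma exists_S : ∃ S : ℝ, 1 ≤ S ∧ ∀ (x : ℝ) (N : ℕ),
    ∑ n ∈ Finset.Icc 1 N, ((1:ℝ) + (x - (n:ℝ))^2)⁻¹ ≤ S := by
  set g : ℤ → ℝ := fun k => (4:ℝ) / (k:ℝ)^2 + (if k = 0 then 1 else 0) with hg
  have hgnn : ∀ k, 0 ≤ g k := by
    intro k; dsimp [g]; positivity
  have hgsum : Summable g := by
    apply Summable.add
    · have h := (Real.summable_one_div_int_pow (p := 2)).mpr one_lt_two
      simpa [div_eq_mul_inv] using h.mul_left 4
    · apply summable_of_ne_finset_zero (s := ({0} : Finset ℤ))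
      intro k hk
      simp only [Finset.mem_singleton] at hk
      simp [hk]
  refine ⟨∑' k, g k, ?_, ?_⟩
  · have h := Summable.le_tsum hgsum 0 (fun k _ => hgnn k)
    simpa [g] using h
  intro x N
  set m : ℤ := round x with hm
  have hxr : |x - (m:ℝ)| ≤ 1/2 := abs_sub_round x
  have hxsq : (x - (m:ℝ))^2 ≤ 1/4 := by
    obtain ⟨h1, h2⟩ := abs_le.mp hxr
    nlinarith
  have key : ∀ n ∈ Finset.Icc 1 N, ((1:ℝ) + (x - (n:ℝ))^2)⁻¹ ≤ g ((n:ℤ) - m) := by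
    intro n _
    by_cases hnm : (n:ℤ) = m
    · rw [hnm]
      have h1 : ((1:ℝ) + (x - (n:ℝ))^2)⁻¹ ≤ 1 := by
        apply inv_le_one_of_one_le₀
        nlinarith [sq_nonneg (x - (n:ℝ))]
      simpa [g] using h1
    · have hk : ((n:ℤ) - m) ≠ 0 := sub_ne_zero.mpr hnm
      have hkr : (((n:ℤ) - m : ℤ) : ℝ) = (n:ℝ) - (m:ℝ) := by push_cast; ring
      have hkne : ((n:ℝ) - (m:ℝ)) ≠ 0 := by
        rw [← hkr]; exact_mod_cast hk
      have h4 : (0:ℝ) < ((n:ℝ) - (m:ℝ))^2 := by positivity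
      have hker : ((n:ℝ) - (m:ℝ))^2 ≤ 4 * (1 + (x - (n:ℝ))^2) := by
        nlinarith [sq_nonneg ((x - (m:ℝ)) + (x - (n:ℝ))), sq_nonneg (x - (n:ℝ))]
      have hfin : ((1:ℝ) + (x - (n:ℝ))^2)⁻¹ ≤ 4 / ((n:ℝ) - (m:ℝ))^2 := by
        rw [inv_eq_one_div, div_le_div_iff₀ (by positivity) h4]
        linarith
      refine hfin.trans ?_
      simp only [g, if_neg hk, hkr]
      norm_num
  calc ∑ n ∈ Finset.Icc 1 N, ((1:ℝ) + (x - (n:ℝ))^2)⁻¹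
      ≤ ∑ n ∈ Finset.Icc 1 N, g ((n:ℤ) - m) := Finset.sum_le_sum key
    _ = ∑ k ∈ (Finset.Icc 1 N).image (fun n : ℕ => (n:ℤ) - m), g k := by
        rw [Finset.sum_image]
        intro a _ b _ hab
        simp only at hab
        omega
    _ ≤ ∑' k, g k := Summable.sum_le_tsum _ (fun k _ => hgnn k) hgsum



variable (φ : SchwartzMap ℝ ℂ)

lemma norm_exp_eq_one {z : ℂ} (hz : z.re = 0) : ‖Complex.exp z‖ = 1 := by
  rw [Complex.norm_exp, hz, Real.exp_zero]

def gc (n : ℕ) : ℝ → ℂ := fun x : ℝ =>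
  φ (x - n) * Complex.exp (2 * Real.pi * Complex.I * (n : ℝ) * x)

lemma cont_gc (n : ℕ) : Continuous (gc φ n) := by
  apply Continuous.mul
  · exact φ.continuous.comp (continuous_id.sub continuous_const)
  · exact Complex.continuous_exp.comp (by continuity)

lemma norm_gc (n : ℕ) (x : ℝ) : ‖gc φ n x‖ = ‖φ (x - (n:ℝ))‖ := by
  rw [gc, norm_mul, norm_exp_eq_one (by simp), mul_one]

lemma int_gc (n : ℕ) : Integrable (gc φ n) := by
  have h : Integrable (fun x : ℝ =>
      Complex.exp (2 * Real.pi * Complex.I * (n : ℝ) * x) * φ (x - (n:ℝ))) := by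
    apply Integrable.bdd_mul (φ.integrable.comp_sub_right (n:ℝ))
    · exact (Complex.continuous_exp.comp (by continuity)).aestronglyMeasurable
    · exact ae_of_all _ fun x => le_of_eq (norm_exp_eq_one (by simp))
  exact h.congr (ae_of_all _ fun x => by rw [gc]; ring)

lemma fourier_gc (n : ℕ) (ξ : ℝ) :
    𝓕 (gc φ n) ξ = Complex.exp (2 * Real.pi * Complex.I * n * (n - ξ)) * 𝓕 ⇑φ (ξ - n) := by
  rw [Real.fourier_real_eq_integral_exp_smul]
  have step : ∀ x : ℝ, Complex.exp (↑(-2 * Real.pi * x * ξ) * Complex.I) • (gc φ n x)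
      = Complex.exp (2 * Real.pi * Complex.I * n * (n - ξ)) *
        (Complex.exp (↑(-2 * Real.pi * (x - (n:ℝ)) * (ξ - (n:ℝ))) * Complex.I) • φ (x - (n:ℝ))) := by
    intro x
    simp only [smul_eq_mul, gc]
    rw [show Complex.exp (↑(-2 * Real.pi * x * ξ) * Complex.I) *
          (φ (x - (n:ℝ)) * Complex.exp (2 * Real.pi * Complex.I * (n : ℝ) * x))
        = Complex.exp (↑(-2 * Real.pi * x * ξ) * Complex.I + 2 * Real.pi * Complex.I * (n : ℝ) * x)
          * φ (x - (n:ℝ)) by rw [Complex.exp_add]; ring]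
    rw [show Complex.exp (2 * Real.pi * Complex.I * n * (n - ξ)) *
          (Complex.exp (↑(-2 * Real.pi * (x - (n:ℝ)) * (ξ - (n:ℝ))) * Complex.I) * φ (x - (n:ℝ)))
        = Complex.exp (2 * Real.pi * Complex.I * n * (n - ξ)
            + ↑(-2 * Real.pi * (x - (n:ℝ)) * (ξ - (n:ℝ))) * Complex.I)
          * φ (x - (n:ℝ)) by rw [Complex.exp_add]; ring]
    congr 2
    push_cast
    ring
  rw [integral_congr_ae (ae_of_all _ step), integral_const_mul]
  congr 1
  have h := integral_sub_right_eq_self (μ := volume)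
    (fun y : ℝ => Complex.exp (↑(-2 * Real.pi * y * (ξ - (n:ℝ))) * Complex.I) • φ y) (n:ℝ)
  rw [h, ← Real.fourier_real_eq_integral_exp_smul]

lemma norm_fourier_gc (n : ℕ) (ξ : ℝ) : ‖𝓕 (gc φ n) ξ‖ = ‖𝓕 ⇑φ (ξ - n)‖ := by
  rw [fourier_gc, norm_mul, norm_exp_eq_one (by simp), one_mul]

lemma int_fourier_gc (n : ℕ) : Integrable (𝓕 (gc φ n)) := by
  have hΦ : Integrable (fun ξ : ℝ => 𝓕 ⇑φ (ξ - (n:ℝ))) :=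
    ((SchwartzMap.fourierTransformCLM ℂ φ).integrable.congr
      (ae_of_all _ fun ξ => by rw [SchwartzMap.fourierTransformCLM_apply]; rfl)).comp_sub_right (n:ℝ)
  have h : Integrable (fun ξ : ℝ =>
      Complex.exp (2 * Real.pi * Complex.I * n * (n - ξ)) * 𝓕 ⇑φ (ξ - (n:ℝ))) := by
    apply Integrable.bdd_mul hΦ
    · exact (Complex.continuous_exp.comp (by continuity)).aestronglyMeasurable
    · exact ae_of_all _ fun ξ => le_of_eq (norm_exp_eq_one (by simp))
  exact h.congr (ae_of_all _ fun ξ => (fourier_gc φ n ξ).symm)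

lemma cont_fourier_gc (n : ℕ) : Continuous (𝓕 (gc φ n)) := by
  have : Continuous fun ξ : ℝ =>
      Complex.exp (2 * Real.pi * Complex.I * n * (n - ξ)) * 𝓕 ⇑φ (ξ - (n:ℝ)) := by
    apply Continuous.mul
    · exact Complex.continuous_exp.comp (by continuity)
    · have hc : Continuous (𝓕 ⇑φ) := by
        rw [← SchwartzMap.fourier_coe]
        exact (SchwartzMap.fourierTransformCLM ℂ φ).continuous
      exact hc.comp (continuous_id.sub continuous_const)
  exact continuous_congr (fun ξ => (fourier_gc φ n ξ).symm) |>.mp this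



lemma plancherel_pair {f g : ℝ → ℂ} (hfi : Integrable f) (hgc : Continuous g)
    (hgi : Integrable g) (hFg : Integrable (𝓕 g)) (hFgc : Continuous (𝓕 g)) :
    ∫ ξ, 𝓕 f ξ * (starRingEnd ℂ) (𝓕 g ξ) = ∫ x, f x * (starRingEnd ℂ) (g x) := by
  set G : ℝ → ℂ := fun ξ => (starRingEnd ℂ) (𝓕 g ξ) with hG
  have hGi : Integrable G := by
    refine hFg.mono ((Complex.continuous_conj.comp hFgc).aestronglyMeasurable)
      (ae_of_all _ fun ξ => ?_)
    simp [hG]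
  have key : ∀ x, 𝓕 G x = (starRingEnd ℂ) (g x) := by
    intro x
    have h1 : 𝓕 G x = (starRingEnd ℂ) (𝓕 (𝓕 g) (-x)) := by
      rw [Real.fourier_real_eq_integral_exp_smul,
        Real.fourier_real_eq_integral_exp_smul, ← integral_conj]
      apply integral_congr_ae (ae_of_all _ _)
      intro ξ
      simp only [smul_eq_mul, map_mul, hG, RingHomCompTriple.comp_apply, Complex.conj_conj]
      congr 1
      rw [← Complex.exp_conj]
      congr 1
      simp only [map_mul, Complex.conj_ofReal, Complex.conj_I]
      push_cast
      ring
    rw [h1, ← Real.fourierInv_eq_fourier_neg,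
      hgc.fourierInv_fourier_eq hgi hFg]
  have mult := VectorFourier.integral_fourierIntegral_smul_eq_flip
    (e := Real.fourierChar) (L := innerₗ ℝ) (μ := (volume : Measure ℝ)) (ν := (volume : Measure ℝ))
    Real.continuous_fourierChar (by exact continuous_inner) hfi hGi
  rw [flip_innerₗ] at mult
  have lhs_eq : ∫ ξ, 𝓕 f ξ * (starRingEnd ℂ) (𝓕 g ξ) =
      ∫ ξ, VectorFourier.fourierIntegral Real.fourierChar volume (innerₗ ℝ) f ξ • G ξ := by
    apply integral_congr_ae (ae_of_all _ _)
    intro ξ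
    rw [smul_eq_mul]
    rfl
  rw [lhs_eq, mult]
  apply integral_congr_ae (ae_of_all _ _)
  intro x
  rw [smul_eq_mul]
  congr 1
  exact key x


lemma integral_ofReal' (f : ℝ → ℝ) : ∫ x, ((f x : ℝ) : ℂ) = ((∫ x, f x : ℝ) : ℂ) := by
  have h := integral_ofReal (𝕜 := ℂ) (f := f) (μ := volume)
  exact h


lemma cross (h2 : ∀ ξ : ℝ, ξ ∉ Set.Icc (-(1/2) : ℝ) (1/2) → 𝓕 ⇑φ ξ = 0)
    {m n : ℕ} (hmn : m ≠ n) :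
    ∫ ξ, 𝓕 (gc φ m) ξ * (starRingEnd ℂ) (𝓕 (gc φ n) ξ) = 0 := by
  apply integral_eq_zero_of_ae
  have habs : (1:ℝ) ≤ |(m:ℝ) - (n:ℝ)| := by
    have hz : (m:ℤ) - (n:ℤ) ≠ 0 := by
      intro h; apply hmn; omega
    have h := Int.one_le_abs hz
    have : ((1:ℤ):ℝ) ≤ ((|(m:ℤ) - (n:ℤ)| : ℤ) : ℝ) := by exact_mod_cast h
    rwa [Int.cast_abs, Int.cast_sub, Int.cast_natCast, Int.cast_natCast, Int.cast_one] at this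
  have hsub : {ξ : ℝ | ¬ (𝓕 (gc φ m) ξ * (starRingEnd ℂ) (𝓕 (gc φ n) ξ) = 0)} ⊆
      Set.Icc (max (m:ℝ) n - 1/2) (min (m:ℝ) n + 1/2) := by
    intro ξ hξ
    simp only [Set.mem_setOf_eq] at hξ
    have hm0 : ξ - (m:ℝ) ∈ Set.Icc (-(1/2) : ℝ) (1/2) := by
      by_contra hc
      exact hξ (by rw [fourier_gc φ m ξ, h2 _ hc]; simp)
    have hn0 : ξ - (n:ℝ) ∈ Set.Icc (-(1/2) : ℝ) (1/2) := by
      by_contra hc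
      exact hξ (by rw [fourier_gc φ n ξ, h2 _ hc]; simp)
    obtain ⟨hm1, hm2⟩ := hm0
    obtain ⟨hn1, hn2⟩ := hn0
    constructor
    · rw [sub_le_iff_le_add, max_le_iff]
      constructor <;> linarith
    · rw [← sub_le_iff_le_add, le_min_iff]
      constructor <;> linarith
  rw [Filter.EventuallyEq, ae_iff]
  apply measure_mono_null hsub
  rw [Real.volume_Icc, ENNReal.ofReal_eq_zero]
  have hms : max (m:ℝ) n - min (m:ℝ) n = |(n:ℝ) - (m:ℝ)| := max_sub_min_eq_abs _ _
  rw [abs_sub_comm] at hms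
  linarith

lemma diag (n : ℕ) :
    ∫ ξ, 𝓕 (gc φ n) ξ * (starRingEnd ℂ) (𝓕 (gc φ n) ξ)
      = ((∫ ξ, ‖𝓕 ⇑φ ξ‖^2 : ℝ) : ℂ) := by
  have h1 : ∀ ξ : ℝ, 𝓕 (gc φ n) ξ * (starRingEnd ℂ) (𝓕 (gc φ n) ξ)
      = ((‖𝓕 ⇑φ (ξ - (n:ℝ))‖^2 : ℝ) : ℂ) := by
    intro ξ
    rw [Complex.mul_conj]
    norm_cast
    rw [Complex.normSq_eq_norm_sq, norm_fourier_gc]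
  rw [integral_congr_ae (ae_of_all _ h1), integral_ofReal']
  congr 1
  exact integral_sub_right_eq_self (μ := volume) (fun ξ : ℝ => ‖𝓕 ⇑φ ξ‖^2) (n:ℝ)

def fN (N : ℕ) : ℝ → ℂ := fun x => ∑ n ∈ Finset.Icc 1 N, gc φ n x

lemma int_gg (m n : ℕ) :
    Integrable (fun x : ℝ => gc φ m x * (starRingEnd ℂ) (gc φ n x)) := by
  obtain ⟨K, hK1, hK⟩ := exists_decay φ
  have h : Integrable (fun x : ℝ => (starRingEnd ℂ) (gc φ n x) * gc φ m x) := by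
    apply Integrable.bdd_mul (c := K) (int_gc φ m)
    · exact (Complex.continuous_conj.comp (cont_gc φ n)).aestronglyMeasurable
    · refine ae_of_all _ fun x => ?_
      rw [RCLike.norm_conj, norm_gc]
      refine (hK _).trans ?_
      nlinarith [sq_nonneg (x - (n:ℝ)), inv_le_one_of_one_le₀
        (by nlinarith [sq_nonneg (x - (n:ℝ))] : (1:ℝ) ≤ 1 + (x - (n:ℝ))^2),
        inv_nonneg.mpr (by positivity : (0:ℝ) ≤ 1 + (x - (n:ℝ))^2)]
  exact h.congr (ae_of_all _ fun x => by ring)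

lemma l2_key (h2 : ∀ ξ : ℝ, ξ ∉ Set.Icc (-(1/2) : ℝ) (1/2) → 𝓕 ⇑φ ξ = 0) (N : ℕ) :
    ∫ x, ‖fN φ N x‖^2 = N * ∫ ξ, ‖𝓕 ⇑φ ξ‖^2 := by
  set a : ℝ := ∫ ξ, ‖𝓕 ⇑φ ξ‖^2 with ha
  have hC : ∫ x, fN φ N x * (starRingEnd ℂ) (fN φ N x) = (N : ℂ) * (a : ℂ) := by
    have expand : ∀ x : ℝ, fN φ N x * (starRingEnd ℂ) (fN φ N x)
        = ∑ m ∈ Finset.Icc 1 N, ∑ n ∈ Finset.Icc 1 N,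
            gc φ m x * (starRingEnd ℂ) (gc φ n x) := by
      intro x
      rw [fN, map_sum, Finset.sum_mul_sum]
    rw [integral_congr_ae (ae_of_all _ expand),
      integral_finset_sum _ (fun m _ => integrable_finset_sum _ (fun n _ => int_gg φ m n))]
    have hper : ∀ m ∈ Finset.Icc 1 N,
        (∫ x, ∑ n ∈ Finset.Icc 1 N, gc φ m x * (starRingEnd ℂ) (gc φ n x)) = (a : ℂ) := by
      intro m hm
      rw [integral_finset_sum _ (fun n _ => int_gg φ m n)]
      have hval : ∀ n ∈ Finset.Icc 1 N,
          (∫ x, gc φ m x * (starRingEnd ℂ) (gc φ n x))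
            = if m = n then ((a : ℝ) : ℂ) else 0 := by
        intro n _
        rw [← plancherel_pair (int_gc φ m) (cont_gc φ n) (int_gc φ n)
          (int_fourier_gc φ n) (cont_fourier_gc φ n)]
        by_cases hmn : m = n
        · rw [if_pos hmn, hmn, diag]
        · rw [if_neg hmn, cross φ h2 hmn]
      rw [Finset.sum_congr rfl hval, Finset.sum_ite_eq, if_pos hm]
    rw [Finset.sum_congr rfl hper, Finset.sum_const, Nat.card_Icc, nsmul_eq_mul]
    norm_num
  have hL : ∫ x, fN φ N x * (starRingEnd ℂ) (fN φ N x) = ((∫ x, ‖fN φ N x‖^2 : ℝ) : ℂ) := by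
    have h1 : ∀ x : ℝ, fN φ N x * (starRingEnd ℂ) (fN φ N x) = ((‖fN φ N x‖^2 : ℝ) : ℂ) := by
      intro x
      rw [Complex.mul_conj]
      norm_cast
      rw [Complex.normSq_eq_norm_sq]
    rw [integral_congr_ae (ae_of_all _ h1), integral_ofReal']
  rw [hL] at hC
  exact_mod_cast hC

lemma a_half (h1 : ∀ ξ ∈ Set.Icc (-(1/4) : ℝ) (1/4), 𝓕 ⇑φ ξ = 1) :
    1/2 ≤ ∫ ξ, ‖𝓕 ⇑φ ξ‖^2 := by
  set Φ := SchwartzMap.fourierTransformCLM ℂ φ with hΦdef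
  have hΦ : ⇑Φ = 𝓕 ⇑φ := rfl
  have hint : Integrable (fun ξ : ℝ => ‖𝓕 ⇑φ ξ‖^2) := by
    obtain ⟨K, hK1, hK⟩ := exists_decay Φ
    have h : Integrable (fun ξ : ℝ => ‖Φ ξ‖ * ‖Φ ξ‖) := by
      apply Integrable.bdd_mul (c := K) Φ.integrable.norm
      · exact Φ.continuous.norm.aestronglyMeasurable
      · refine ae_of_all _ fun ξ => ?_
        rw [norm_norm]
        refine (hK ξ).trans ?_
        nlinarith [inv_le_one_of_one_le₀ (by nlinarith [sq_nonneg ξ] : (1:ℝ) ≤ 1 + ξ^2),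
          inv_nonneg.mpr (by positivity : (0:ℝ) ≤ 1 + ξ^2)]
    refine h.congr (ae_of_all _ fun ξ => ?_)
    rw [← hΦ]
    ring
  calc (1/2 : ℝ) = ∫ _ξ in Set.Icc (-(1/4) : ℝ) (1/4), (1:ℝ) := by
        rw [setIntegral_const, Real.volume_real_Icc]
        norm_num
    _ = ∫ ξ in Set.Icc (-(1/4) : ℝ) (1/4), ‖𝓕 ⇑φ ξ‖^2 := by
        refine (setIntegral_congr_fun measurableSet_Icc fun ξ hξ => ?_).symm
        rw [h1 ξ hξ]
        norm_num
    _ ≤ ∫ ξ, ‖𝓕 ⇑φ ξ‖^2 := setIntegral_le_integral hint (ae_of_all _ fun ξ => by positivity)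

lemma cont_fN (N : ℕ) : Continuous (fN φ N) :=
  continuous_finset_sum _ fun n _ => cont_gc φ n

lemma int_fN (N : ℕ) : Integrable (fN φ N) :=
  integrable_finset_sum _ fun n _ => int_gc φ n

section Bounds

variable {K S : ℝ}

lemma sum_norm_le (hK1 : 1 ≤ K) (hK : ∀ x : ℝ, ‖φ x‖ ≤ K * (1 + x^2)⁻¹)
  (hS : ∀ (x : ℝ) (N : ℕ), ∑ n ∈ Finset.Icc 1 N, ((1:ℝ) + (x - (n:ℝ))^2)⁻¹ ≤ S) (x : ℝ) (N : ℕ) : ∑ n ∈ Finset.Icc 1 N, ‖φ (x - (n:ℝ))‖ ≤ K * S := by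
  calc ∑ n ∈ Finset.Icc 1 N, ‖φ (x - (n:ℝ))‖
      ≤ ∑ n ∈ Finset.Icc 1 N, K * ((1:ℝ) + (x - (n:ℝ))^2)⁻¹ :=
        Finset.sum_le_sum fun n _ => by
          have h := hK (x - (n:ℝ))
          calc ‖φ (x - (n:ℝ))‖ ≤ K * (1 + (x - (n:ℝ))^2)⁻¹ := h
            _ = K * ((1:ℝ) + (x - (n:ℝ))^2)⁻¹ := by norm_num
    _ = K * ∑ n ∈ Finset.Icc 1 N, ((1:ℝ) + (x - (n:ℝ))^2)⁻¹ := by rw [Finset.mul_sum]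
    _ ≤ K * S := by
        apply mul_le_mul_of_nonneg_left (hS x N) (by linarith)

lemma norm_fN_le (x : ℝ) (N : ℕ) : ‖fN φ N x‖ ≤ ∑ n ∈ Finset.Icc 1 N, ‖φ (x - (n:ℝ))‖ := by
  refine (norm_sum_le _ _).trans ?_
  apply Finset.sum_le_sum
  intro n _
  rw [norm_gc]

lemma norm_fN_le' (hK1 : 1 ≤ K) (hK : ∀ x : ℝ, ‖φ x‖ ≤ K * (1 + x^2)⁻¹)
    (hS : ∀ (x : ℝ) (N : ℕ), ∑ n ∈ Finset.Icc 1 N, ((1:ℝ) + (x - (n:ℝ))^2)⁻¹ ≤ S)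
    (x : ℝ) (N : ℕ) : ‖fN φ N x‖ ≤ K * S :=
  (norm_fN_le φ x N).trans (sum_norm_le φ hK1 hK hS x N)

lemma lint_sum (N : ℕ) :
    ∫⁻ x : ℝ, ∑ n ∈ Finset.Icc 1 N, ENNReal.ofReal ‖φ (x - (n:ℝ))‖
      = (N : ENNReal) * ENNReal.ofReal (∫ y : ℝ, ‖φ y‖) := by
  rw [lintegral_finset_sum (Finset.Icc 1 N)
    (f := fun (n : ℕ) (x : ℝ) => ENNReal.ofReal ‖φ (x - (n:ℝ))‖)
    (fun n _ => ENNReal.measurable_ofReal.comp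
      (φ.continuous.norm.comp (continuous_sub_right ((n:ℕ):ℝ))).measurable)]
  have hterm : ∀ n : ℕ, (∫⁻ x : ℝ, ENNReal.ofReal ‖φ (x - (n:ℝ))‖)
      = ENNReal.ofReal (∫ y : ℝ, ‖φ y‖) := by
    intro n
    rw [lintegral_sub_right_eq_self (fun y : ℝ => ENNReal.ofReal ‖φ y‖) (n:ℝ)]
    rw [ofReal_integral_eq_lintegral_ofReal φ.integrable.norm
      (ae_of_all _ fun y => norm_nonneg _)]
  rw [Finset.sum_congr rfl (fun n _ => hterm n), Finset.sum_const, Nat.card_Icc,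
    nsmul_eq_mul]
  norm_num

lemma rpow_norm_le (hK1 : 1 ≤ K) (hK : ∀ x : ℝ, ‖φ x‖ ≤ K * (1 + x^2)⁻¹)
    (hS1 : 1 ≤ S)
    (hS : ∀ (x : ℝ) (N : ℕ), ∑ n ∈ Finset.Icc 1 N, ((1:ℝ) + (x - (n:ℝ))^2)⁻¹ ≤ S)
    (x : ℝ) (N : ℕ) {r : ℝ} (hr : 1 ≤ r) :
    ‖fN φ N x‖ ^ r ≤ (K * S) ^ (r - 1) * ∑ n ∈ Finset.Icc 1 N, ‖φ (x - (n:ℝ))‖ := by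
  have hKSpos : (0:ℝ) < K * S := by nlinarith
  have hsum_nonneg : (0:ℝ) ≤ ∑ n ∈ Finset.Icc 1 N, ‖φ (x - (n:ℝ))‖ :=
    Finset.sum_nonneg fun n _ => norm_nonneg _
  rcases eq_or_lt_of_le (norm_nonneg (fN φ N x)) with h0 | hpos
  · rw [← h0, Real.zero_rpow (by linarith : (0:ℝ) < r).ne']
    exact mul_nonneg (Real.rpow_nonneg hKSpos.le _) hsum_nonneg
  · have hsplit : ‖fN φ N x‖ ^ r = ‖fN φ N x‖ ^ (r - 1) * ‖fN φ N x‖ := by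
      nth_rewrite 1 [show r = (r - 1) + 1 by ring]
      rw [Real.rpow_add hpos, Real.rpow_one]
    rw [hsplit]
    apply mul_le_mul
    · apply Real.rpow_le_rpow (le_of_lt hpos) (norm_fN_le' φ hK1 hK hS x N) (by linarith)
    · exact norm_fN_le φ x N
    · exact le_of_lt hpos
    · exact Real.rpow_nonneg hKSpos.le _

lemma lint_rpow_le (hK1 : 1 ≤ K) (hK : ∀ x : ℝ, ‖φ x‖ ≤ K * (1 + x^2)⁻¹)
    (hS1 : 1 ≤ S)
    (hS : ∀ (x : ℝ) (N : ℕ), ∑ n ∈ Finset.Icc 1 N, ((1:ℝ) + (x - (n:ℝ))^2)⁻¹ ≤ S)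
    {r : ℝ} (hr : 1 ≤ r) (N : ℕ) :
    ∫⁻ x : ℝ, (ENNReal.ofReal ‖fN φ N x‖) ^ r
      ≤ ENNReal.ofReal ((K * S) ^ (r - 1) * (∫ y : ℝ, ‖φ y‖)) * N := by
  have hpt : ∀ x : ℝ, (ENNReal.ofReal ‖fN φ N x‖) ^ r
      ≤ ENNReal.ofReal ((K * S) ^ (r - 1)) *
          ∑ n ∈ Finset.Icc 1 N, ENNReal.ofReal ‖φ (x - (n:ℝ))‖ := by
    intro x
    rw [ENNReal.ofReal_rpow_of_nonneg (norm_nonneg _) (by linarith)]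
    calc ENNReal.ofReal (‖fN φ N x‖ ^ r)
        ≤ ENNReal.ofReal ((K * S) ^ (r - 1) * ∑ n ∈ Finset.Icc 1 N, ‖φ (x - (n:ℝ))‖) :=
          ENNReal.ofReal_le_ofReal (rpow_norm_le φ hK1 hK hS1 hS x N hr)
      _ = ENNReal.ofReal ((K * S) ^ (r - 1)) *
            ENNReal.ofReal (∑ n ∈ Finset.Icc 1 N, ‖φ (x - (n:ℝ))‖) := by
          rw [ENNReal.ofReal_mul (by positivity)]
      _ = ENNReal.ofReal ((K * S) ^ (r - 1)) *
            ∑ n ∈ Finset.Icc 1 N, ENNReal.ofReal ‖φ (x - (n:ℝ))‖ := by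
          rw [ENNReal.ofReal_sum_of_nonneg (fun n _ => norm_nonneg _)]
  calc ∫⁻ x : ℝ, (ENNReal.ofReal ‖fN φ N x‖) ^ r
      ≤ ∫⁻ x : ℝ, ENNReal.ofReal ((K * S) ^ (r - 1)) *
          ∑ n ∈ Finset.Icc 1 N, ENNReal.ofReal ‖φ (x - (n:ℝ))‖ := lintegral_mono hpt
    _ = ENNReal.ofReal ((K * S) ^ (r - 1)) *
          ∫⁻ x : ℝ, ∑ n ∈ Finset.Icc 1 N, ENNReal.ofReal ‖φ (x - (n:ℝ))‖ := by
        rw [lintegral_const_mul]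
        apply Finset.measurable_sum
        intro n _
        exact (ENNReal.continuous_ofReal.comp
          ((φ.continuous.comp (continuous_id.sub continuous_const)).norm)).measurable
    _ = ENNReal.ofReal ((K * S) ^ (r - 1)) * ((N : ENNReal) * ENNReal.ofReal (∫ y : ℝ, ‖φ y‖)) := by
        rw [lint_sum]
    _ = ENNReal.ofReal ((K * S) ^ (r - 1) * (∫ y : ℝ, ‖φ y‖)) * N := by
        rw [ENNReal.ofReal_mul (by positivity)]
        ring

lemma lint_two_ge (h1 : ∀ ξ ∈ Set.Icc (-(1/4) : ℝ) (1/4), 𝓕 ⇑φ ξ = 1)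
    (h2 : ∀ ξ : ℝ, ξ ∉ Set.Icc (-(1/2) : ℝ) (1/2) → 𝓕 ⇑φ ξ = 0) (N : ℕ) :
    ENNReal.ofReal ((N : ℝ) / 2) ≤ ∫⁻ x : ℝ, (ENNReal.ofReal ‖fN φ N x‖) ^ (2:ℝ) := by
  have hint : Integrable (fun x : ℝ => ‖fN φ N x‖^2) := by
    obtain ⟨K, hK1, hK⟩ := exists_decay φ
    obtain ⟨S, hS1, hS⟩ := exists_S
    have h : Integrable (fun x : ℝ => ‖fN φ N x‖ * ‖fN φ N x‖) := by
      apply Integrable.bdd_mul (c := K * S) (int_fN φ N).norm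
      · exact (cont_fN φ N).norm.aestronglyMeasurable
      · exact ae_of_all _ fun x => by
          rw [norm_norm]; exact norm_fN_le' φ hK1 hK hS x N
    exact h.congr (ae_of_all _ fun x => (sq ‖fN φ N x‖).symm)
  have heq : ∫⁻ x : ℝ, (ENNReal.ofReal ‖fN φ N x‖) ^ (2:ℝ)
      = ENNReal.ofReal (∫ x : ℝ, ‖fN φ N x‖^2) := by
    rw [ofReal_integral_eq_lintegral_ofReal hint (ae_of_all _ fun x => by positivity)]
    apply lintegral_congr
    intro x
    rw [ENNReal.ofReal_rpow_of_nonneg (norm_nonneg _) (by norm_num)]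
    norm_num [Real.rpow_natCast]
  rw [heq]
  apply ENNReal.ofReal_le_ofReal
  rw [l2_key φ h2 N]
  have ha := a_half φ h1
  have : (0:ℝ) ≤ (N:ℝ) := Nat.cast_nonneg N
  nlinarith

end Bounds

theorem main (h1 : ∀ ξ ∈ Set.Icc (-(1/4) : ℝ) (1/4), 𝓕 ⇑φ ξ = 1)
    (h2 : ∀ ξ : ℝ, ξ ∉ Set.Icc (-(1/2) : ℝ) (1/2) → 𝓕 ⇑φ ξ = 0)
    (p : ℝ) (hp : 1 ≤ p) :
    ∃ c C : ℝ, 0 < c ∧ 0 < C ∧ ∀ N : ℕ, 1 ≤ N →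
      ENNReal.ofReal (c * (N : ℝ) ^ (1/p)) ≤ eLpNorm (fN φ N) (ENNReal.ofReal p) volume ∧
      eLpNorm (fN φ N) (ENNReal.ofReal p) volume ≤ ENNReal.ofReal (C * (N : ℝ) ^ (1/p)) := by
  obtain ⟨K, hK1, hK⟩ := exists_decay φ
  obtain ⟨S, hS1, hS⟩ := exists_S
  set M : ℝ := K * S with hMdef
  have hM1 : (1:ℝ) ≤ M := by nlinarith
  have hM0 : (0:ℝ) < M := by linarith
  set L : ℝ := ∫ y : ℝ, ‖φ y‖ with hLdef
  have hL0 : 0 ≤ L := integral_nonneg fun y => norm_nonneg _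
  -- eLpNorm formula
  have hsn : ∀ (r : ℝ), 1 ≤ r → ∀ N : ℕ, eLpNorm (fN φ N) (ENNReal.ofReal r) volume
      = (∫⁻ x : ℝ, (ENNReal.ofReal ‖fN φ N x‖) ^ r) ^ (1/r) := by
    intro r hr N
    rw [eLpNorm_eq_lintegral_rpow_enorm_toReal
      (ne_of_gt (ENNReal.ofReal_pos.mpr (by linarith))) ENNReal.ofReal_ne_top,
      ENNReal.toReal_ofReal (by linarith)]
    congr 1
    apply lintegral_congr
    intro x
    rw [← ofReal_norm]
  -- upper bound
  have hupper : ∀ (r : ℝ), 1 ≤ r → ∀ N : ℕ,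
      eLpNorm (fN φ N) (ENNReal.ofReal r) volume
        ≤ ENNReal.ofReal ((M ^ (r-1) * L + 1) ^ (1/r) * (N:ℝ) ^ (1/r)) := by
    intro r hr N
    rw [hsn r hr N]
    have hb : ∫⁻ x : ℝ, (ENNReal.ofReal ‖fN φ N x‖) ^ r
        ≤ ENNReal.ofReal (M ^ (r-1) * L + 1) * N :=
      (lint_rpow_le φ hK1 hK hS1 hS hr N).trans
        (mul_le_mul_left (ENNReal.ofReal_le_ofReal (by linarith)) _)
    have hBpos : (0:ℝ) ≤ M ^ (r-1) * L + 1 := by positivity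
    calc (∫⁻ x : ℝ, (ENNReal.ofReal ‖fN φ N x‖) ^ r) ^ (1/r)
        ≤ (ENNReal.ofReal (M ^ (r-1) * L + 1) * N) ^ (1/r) :=
          ENNReal.rpow_le_rpow hb (by positivity)
      _ = ENNReal.ofReal ((M ^ (r-1) * L + 1) ^ (1/r) * (N:ℝ) ^ (1/r)) := by
          rw [ENNReal.mul_rpow_of_nonneg _ _ (by positivity : (0:ℝ) ≤ 1/r),
            ENNReal.ofReal_rpow_of_nonneg hBpos (by positivity : (0:ℝ) ≤ 1/r),
            ← ENNReal.ofReal_natCast N,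
            ENNReal.ofReal_rpow_of_nonneg (Nat.cast_nonneg N) (by positivity : (0:ℝ) ≤ 1/r),
            ← ENNReal.ofReal_mul (by positivity)]
  refine ⟨if p ≤ 2 then (M ^ (p-2) / 2) ^ (1/p) else 1 / (2 * (M ^ (p.conjExponent - 1) * L + 1) ^ (1/p.conjExponent)),
    (M ^ (p-1) * L + 1) ^ (1/p), ?_, by positivity, ?_⟩
  · by_cases hp2 : p ≤ 2 <;> simp only [hp2, if_true, if_false, reduceIte] <;> positivity
  intro N hN
  have hN0 : (0:ℝ) < N := by exact_mod_cast hN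
  constructor
  · -- lower bound
    by_cases hp2 : p ≤ 2
    · simp only [hp2, reduceIte]
      -- pointwise comparison of powers
      have hpt : ∀ x : ℝ, (ENNReal.ofReal ‖fN φ N x‖) ^ (2:ℝ)
          ≤ ENNReal.ofReal (M ^ (2-p)) * (ENNReal.ofReal ‖fN φ N x‖) ^ p := by
        intro x
        have he : ENNReal.ofReal ‖fN φ N x‖ ≤ ENNReal.ofReal M :=
          ENNReal.ofReal_le_ofReal (norm_fN_le' φ hK1 hK hS x N)
        calc (ENNReal.ofReal ‖fN φ N x‖) ^ (2:ℝ)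
            = (ENNReal.ofReal ‖fN φ N x‖) ^ (2-p) * (ENNReal.ofReal ‖fN φ N x‖) ^ p := by
              rw [← ENNReal.rpow_add_of_nonneg _ _ (by linarith) (by linarith)]
              norm_num
          _ ≤ (ENNReal.ofReal M) ^ (2-p) * (ENNReal.ofReal ‖fN φ N x‖) ^ p :=
              mul_le_mul_left (ENNReal.rpow_le_rpow he (by linarith)) _
          _ = ENNReal.ofReal (M ^ (2-p)) * (ENNReal.ofReal ‖fN φ N x‖) ^ p := by
              rw [ENNReal.ofReal_rpow_of_nonneg hM0.le (by linarith)]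
      have hkey : ENNReal.ofReal ((N:ℝ)/2)
          ≤ ENNReal.ofReal (M ^ (2-p)) * ∫⁻ x : ℝ, (ENNReal.ofReal ‖fN φ N x‖) ^ p := by
        refine (lint_two_ge φ h1 h2 N).trans ?_
        refine (lintegral_mono hpt).trans ?_
        rw [lintegral_const_mul' _ _ ENNReal.ofReal_ne_top]
      have hdiv : ENNReal.ofReal (M ^ (p-2) * ((N:ℝ)/2))
          ≤ ∫⁻ x : ℝ, (ENNReal.ofReal ‖fN φ N x‖) ^ p := by
        have h2p0 : (0:ℝ) < M ^ (2-p) := by positivity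
        have hne : ENNReal.ofReal (M ^ (2-p)) ≠ 0 := by
          simp only [ne_eq, ENNReal.ofReal_eq_zero, not_le]
          positivity
        have hkey' : ENNReal.ofReal ((N:ℝ)/2)
            ≤ (∫⁻ x : ℝ, (ENNReal.ofReal ‖fN φ N x‖) ^ p) * ENNReal.ofReal (M ^ (2-p)) := by
          rw [mul_comm]
          exact hkey
        refine le_trans ?_ (ENNReal.div_le_of_le_mul hkey')
        rw [ENNReal.le_div_iff_mul_le (Or.inl hne)
          (Or.inl ENNReal.ofReal_ne_top), ← ENNReal.ofReal_mul (by positivity)]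
        apply ENNReal.ofReal_le_ofReal
        refine le_of_eq ?_
        calc M ^ (p-2) * ((N:ℝ)/2) * M ^ (2-p)
            = (M ^ (p-2) * M ^ (2-p)) * ((N:ℝ)/2) := by ring
          _ = (N:ℝ)/2 := by
              rw [← Real.rpow_add hM0]
              norm_num
      rw [hsn p hp N]
      have harg : (M ^ (p-2) / 2) ^ (1/p) * (N:ℝ) ^ (1/p)
          = (M ^ (p-2) * ((N:ℝ)/2)) ^ (1/p) := by
        rw [← Real.mul_rpow (by positivity) hN0.le]
        congr 1
        ring
      calc ENNReal.ofReal ((M ^ (p-2) / 2) ^ (1/p) * (N:ℝ) ^ (1/p))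
          = (ENNReal.ofReal (M ^ (p-2) * ((N:ℝ)/2))) ^ (1/p) := by
            rw [harg, ENNReal.ofReal_rpow_of_nonneg (by positivity) (by positivity : (0:ℝ) ≤ 1/p)]
        _ ≤ (∫⁻ x : ℝ, (ENNReal.ofReal ‖fN φ N x‖) ^ p) ^ (1/p) :=
            ENNReal.rpow_le_rpow hdiv (by positivity)
    · -- case p > 2
      simp only [hp2, reduceIte]
      push_neg at hp2
      have hp1 : 1 < p := by linarith
      set q : ℝ := p.conjExponent with hqdef
      have hpq : p.HolderConjugate q := Real.HolderConjugate.conjExponent hp1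
      have hq1 : 1 ≤ q := hpq.symm.lt.le
      set Cq : ℝ := (M ^ (q-1) * L + 1) ^ (1/q) with hCqdef
      have hCq : 0 < Cq := by positivity
      have hmeasN : Measurable fun x : ℝ => ENNReal.ofReal ‖fN φ N x‖ :=
        ENNReal.measurable_ofReal.comp (cont_fN φ N).norm.measurable
      have hhold : ENNReal.ofReal ((N:ℝ)/2)
          ≤ (∫⁻ x : ℝ, (ENNReal.ofReal ‖fN φ N x‖) ^ p) ^ (1/p) *
            (∫⁻ x : ℝ, (ENNReal.ofReal ‖fN φ N x‖) ^ q) ^ (1/q) := by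
        refine (lint_two_ge φ h1 h2 N).trans ?_
        have hsq : ∀ x : ℝ, (ENNReal.ofReal ‖fN φ N x‖) ^ (2:ℝ)
            = ((fun x : ℝ => ENNReal.ofReal ‖fN φ N x‖) *
               (fun x : ℝ => ENNReal.ofReal ‖fN φ N x‖)) x := by
          intro x
          rw [show (2:ℝ) = 1 + 1 by norm_num,
            ENNReal.rpow_add_of_nonneg _ _ zero_le_one zero_le_one, ENNReal.rpow_one]
          rfl
        rw [lintegral_congr hsq]
        exact ENNReal.lintegral_mul_le_Lp_mul_Lq volume hpq
          hmeasN.aemeasurable hmeasN.aemeasurable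
      have hBq : (∫⁻ x : ℝ, (ENNReal.ofReal ‖fN φ N x‖) ^ q) ^ (1/q)
          ≤ ENNReal.ofReal (Cq * (N:ℝ) ^ (1/q)) := by
        have := hupper q hq1 N
        rwa [hsn q hq1 N] at this
      have hmain : ENNReal.ofReal ((N:ℝ)/2)
          ≤ (∫⁻ x : ℝ, (ENNReal.ofReal ‖fN φ N x‖) ^ p) ^ (1/p) *
              ENNReal.ofReal (Cq * (N:ℝ) ^ (1/q)) :=
        hhold.trans (mul_le_mul_right hBq _)
      have hDne : ENNReal.ofReal (Cq * (N:ℝ) ^ (1/q)) ≠ 0 := by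
        simp only [ne_eq, ENNReal.ofReal_eq_zero, not_le]
        positivity
      have hdiv : ENNReal.ofReal ((N:ℝ)/2) / ENNReal.ofReal (Cq * (N:ℝ) ^ (1/q))
          ≤ (∫⁻ x : ℝ, (ENNReal.ofReal ‖fN φ N x‖) ^ p) ^ (1/p) :=
        ENNReal.div_le_of_le_mul hmain
      rw [hsn p hp N]
      refine le_trans ?_ hdiv
      rw [ENNReal.le_div_iff_mul_le (Or.inl hDne) (Or.inl ENNReal.ofReal_ne_top),
        ← ENNReal.ofReal_mul (by positivity)]
      apply ENNReal.ofReal_le_ofReal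
      refine le_of_eq ?_
      have hNpq : (N:ℝ) ^ (1/p) * (N:ℝ) ^ (1/q) = (N:ℝ) := by
        rw [← Real.rpow_add hN0, show 1/p + 1/q = 1 by
          rw [one_div, one_div]; exact hpq.inv_add_inv_eq_one, Real.rpow_one]
      calc 1 / (2 * Cq) * (N:ℝ) ^ (1/p) * (Cq * (N:ℝ) ^ (1/q))
          = (1 / (2 * Cq) * Cq) * ((N:ℝ) ^ (1/p) * (N:ℝ) ^ (1/q)) := by ring
        _ = (N:ℝ)/2 := by
            rw [hNpq]
            field_simp
  · -- upper bound
    exact hupper p hp N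

end Stmt9

open MeasureTheory FourierTransform in
/-- For Schwartz `φ` with `1_{[-1/4,1/4]} ≤ φ̂ ≤ 1_{[-1/2,1/2]}` and
`f_N(x) = Σ_{1≤n≤N} φ(x-n)e^{2πinx}`, one has `‖f_N‖_{L^p} ≍_p N^{1/p}` for `1 ≤ p < ∞`. -/
theorem stmt_9 (φ : SchwartzMap ℝ ℂ)
    (h1 : ∀ ξ ∈ Set.Icc (-(1/4) : ℝ) (1/4), 𝓕 ⇑φ ξ = 1)
    (h2 : ∀ ξ : ℝ, ξ ∉ Set.Icc (-(1/2) : ℝ) (1/2) → 𝓕 ⇑φ ξ = 0)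
    (h3 : ∀ ξ : ℝ, (𝓕 ⇑φ ξ).im = 0 ∧ 0 ≤ (𝓕 ⇑φ ξ).re ∧ (𝓕 ⇑φ ξ).re ≤ 1)
    (p : ℝ) (hp : 1 ≤ p) :
    ∃ c C : ℝ, 0 < c ∧ 0 < C ∧ ∀ N : ℕ, 1 ≤ N →
      ENNReal.ofReal (c * (N : ℝ) ^ (1/p)) ≤
        eLpNorm (fun x : ℝ => ∑ n ∈ Finset.Icc 1 N,
          φ (x - n) * Complex.exp (2 * Real.pi * Complex.I * (n : ℝ) * x))
          (ENNReal.ofReal p) volume ∧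
      eLpNorm (fun x : ℝ => ∑ n ∈ Finset.Icc 1 N,
          φ (x - n) * Complex.exp (2 * Real.pi * Complex.I * (n : ℝ) * x))
          (ENNReal.ofReal p) volume ≤
        ENNReal.ofReal (C * (N : ℝ) ^ (1/p)) := by
  exact Stmt9.main φ h1 h2 p hp
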